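/- arXiv:1511.08447 — 3 statements merged into one kernel-verified Lean document; each statement's English description precedes it below -/
import Mathlib

section
/- Let L_S be a language over Σ such that every word in L_S is sequential and quiescent, and let L_Q be a language over Σ such that every word in L_Q is legal and quiescent. Then the following are equivalent: (a) for every σ ∈ L_Q and every decomposition σ = σ₁ ++ … ++ σ_k into non-empty, legal, end-to-end quiescent runs, there exist runs τ₁, …, τ_k with τ_i a permutation (List.Perm) of σ_i and τ₁ ++ … ++ τ_k ∈ L_S; (b) for every σ ∈ L_Q and every decomposition σ = σ₁ ++ … ++ σ_k into non-empty, legal, end-to-end quiescent runs, the word [δ] ++ σ₁ ++ [δ] ++ … ++ [δ] ++ σ_k ++ [δ] belongs to 𝓛_U(S_δ). -/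
variable {Op Proc : Type*}

abbrev Ev (Op Proc : Type*) := Op × Proc × Bool

def IsInv (e : Ev Op Proc) : Prop := e.2.2 = true

def EvMatches (e e' : Ev Op Proc) : Prop :=
  e.1 = e'.1 ∧ e.2.1 = e'.2.1 ∧ e.2.2 = true ∧ e'.2.2 = false

def proj [DecidableEq Proc] (p : Proc) (σ : List (Ev Op Proc)) : List (Ev Op Proc) :=
  σ.filter (fun e => e.2.1 = p)

def SequentialRun (σ : List (Ev Op Proc)) : Prop :=
  σ = [] ∨
    ((∃ h : 0 < σ.length, IsInv (σ[0]'h)) ∧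
     (∀ i, i % 2 = 0 → ∀ h : i + 1 < σ.length,
        EvMatches (σ[i]'(Nat.lt_of_succ_lt h)) (σ[i+1]'h)) ∧
     ((σ.length - 1) % 2 = 0 →
        ∃ h : σ.length - 1 < σ.length, IsInv (σ[σ.length - 1]'h)))

def Legal [DecidableEq Proc] (σ : List (Ev Op Proc)) : Prop :=
  ∀ p : Proc, SequentialRun (proj p σ)

def Quiescent (σ : List (Ev Op Proc)) : Prop :=
  ∀ σ₁ (e : Ev Op Proc) σ₂, σ = σ₁ ++ e :: σ₂ → IsInv e → ∃ e' ∈ σ₂, EvMatches e e'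

def ETEQ (σ : List (Ev Op Proc)) : Prop :=
  Quiescent σ ∧ ∀ u, u <+: σ → u ≠ [] → u ≠ σ → ¬ Quiescent u

/-- The alphabet Σ_δ: events together with a fresh quiescence symbol δ. -/
abbrev EvD (Op Proc : Type*) := Ev Op Proc ⊕ Unit

/-- The quiescence symbol δ. -/
def dd : EvD Op Proc := Sum.inr ()

/-- π_Σ: remove all occurrences of δ. -/
def piSigma (w : List (EvD Op Proc)) : List (Ev Op Proc) :=
  w.filterMap Sum.getLeft?

/-- S_δ: the words over Σ_δ whose δ-erasure is in L_S and all of whose prefixes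
ending in δ have quiescent δ-erasure. -/
def Sdelta (L_S : Set (List (Ev Op Proc))) : Set (List (EvD Op Proc)) :=
  {w | piSigma w ∈ L_S ∧ ∀ u : List (EvD Op Proc), u ++ [dd] <+: w → Quiescent (piSigma u)}

/-- One swap of two adjacent letters related by the independence relation I. -/
inductive SwapStep {A : Type*} (I : A → A → Prop) : List A → List A → Prop
  | swap (u v : List A) (a b : A) : I a b → SwapStep I (u ++ a :: b :: v) (u ++ b :: a :: v)

/-- The universal independence relation on Σ_δ: any two events from Σ commute. -/
def IndepU (x y : EvD Op Proc) : Prop :=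
  ∃ a b : Ev Op Proc, x = Sum.inl a ∧ y = Sum.inl b

/-- 𝓛_U(L): closure of L under swaps of adjacent Σ-letters. -/
def LU (L : Set (List (EvD Op Proc))) : Set (List (EvD Op Proc)) :=
  {w' | ∃ w ∈ L, Relation.ReflTransGen (SwapStep (IndepU (Op := Op) (Proc := Proc))) w w'}

/-- The word [δ] ++ σ₁ ++ [δ] ++ σ₂ ++ [δ] ++ … ++ [δ] ++ σ_k ++ [δ]. -/
def sigmaDelta (L : List (List (Ev Op Proc))) : List (EvD Op Proc) :=
  [dd] ++ List.intercalate [dd] (L.map (List.map Sum.inl)) ++ [dd]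

-- basic piSigma lemmas
@[simp] lemma piSigma_nil : piSigma ([] : List (EvD Op Proc)) = [] := rfl

@[simp] lemma piSigma_cons_inl (a : Ev Op Proc) (w : List (EvD Op Proc)) :
    piSigma (Sum.inl a :: w) = a :: piSigma w := rfl

@[simp] lemma piSigma_cons_inr (u : Unit) (w : List (EvD Op Proc)) :
    piSigma (Sum.inr u :: w) = piSigma w := rfl

@[simp] lemma piSigma_cons_dd (w : List (EvD Op Proc)) :
    piSigma (dd :: w) = piSigma w := rfl

@[simp] lemma piSigma_append (u v : List (EvD Op Proc)) :
    piSigma (u ++ v) = piSigma u ++ piSigma v := by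
  simp [piSigma]

@[simp] lemma piSigma_map_inl (s : List (Ev Op Proc)) :
    piSigma (s.map Sum.inl) = s := by
  induction s with
  | nil => rfl
  | cons a s ih => simp [ih]

lemma quiescent_nil : Quiescent ([] : List (Ev Op Proc)) := by
  intro σ₁ e σ₂ h
  simp at h

-- splitF
def splitF : List (EvD Op Proc) → List (Ev Op Proc) × List (List (Ev Op Proc))
  | [] => ([], [])
  | Sum.inl a :: w => ((splitF w).1.cons a, (splitF w).2)
  | Sum.inr _ :: w => ([], (splitF w).1 :: (splitF w).2)

@[simp] lemma splitF_nil : splitF ([] : List (EvD Op Proc)) = ([], []) := rfl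
@[simp] lemma splitF_cons_inl (a : Ev Op Proc) (w) :
    splitF (Sum.inl a :: w) = ((splitF w).1.cons a, (splitF w).2) := rfl
@[simp] lemma splitF_cons_inr (u : Unit) (w : List (EvD Op Proc)) :
    splitF (Sum.inr u :: w) = ([], (splitF w).1 :: (splitF w).2) := rfl

@[simp] lemma splitF_cons_dd (w : List (EvD Op Proc)) :
    splitF (dd :: w) = ([], (splitF w).1 :: (splitF w).2) := rfl

lemma piSigma_eq_splitF (w : List (EvD Op Proc)) :
    piSigma w = (splitF w).1 ++ ((splitF w).2).flatten := by
  induction w with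
  | nil => rfl
  | cons x w ih =>
    cases x with
    | inl a => simp [ih]
    | inr u => simp [ih]

lemma splitF_map_inl_append (s : List (Ev Op Proc)) (w : List (EvD Op Proc)) :
    splitF (s.map Sum.inl ++ w) = (s ++ (splitF w).1, (splitF w).2) := by
  induction s with
  | nil => simp
  | cons a s ih => simp [ih]

-- intercalate unfolding
lemma intercalate_nil' {α} (sep : List α) : List.intercalate sep [] = [] := rfl
lemma intercalate_single {α} (sep : List α) (a : List α) :
    List.intercalate sep [a] = a := by
  simp [List.intercalate]
lemma intercalate_cons_cons' {α} (sep a b : List α) (t : List (List α)) :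
    List.intercalate sep (a :: b :: t) = a ++ sep ++ List.intercalate sep (b :: t) := by
  simp [List.intercalate]

/-- the body of sigmaDelta -/
def JJ (L : List (List (Ev Op Proc))) : List (EvD Op Proc) :=
  List.intercalate [dd] (L.map (List.map Sum.inl))

lemma sigmaDelta_eq (L : List (List (Ev Op Proc))) :
    sigmaDelta L = dd :: (JJ L ++ [dd]) := by
  simp [sigmaDelta, JJ]

@[simp] lemma JJ_nil : JJ ([] : List (List (Ev Op Proc))) = [] := rfl
lemma JJ_single (s : List (Ev Op Proc)) : JJ [s] = s.map Sum.inl := by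
  simp [JJ, intercalate_single]
lemma JJ_cons_cons (s t : List (Ev Op Proc)) (L : List (List (Ev Op Proc))) :
    JJ (s :: t :: L) = s.map Sum.inl ++ dd :: JJ (t :: L) := by
  simp [JJ, intercalate_cons_cons']

lemma splitF_JJ (s : List (Ev Op Proc)) (L : List (List (Ev Op Proc))) :
    splitF (JJ (s :: L) ++ [dd]) = (s, L ++ [[]]) := by
  induction L generalizing s with
  | nil => simp [JJ_single, splitF_map_inl_append]
  | cons t L ih =>
      rw [JJ_cons_cons]
      simp only [List.append_assoc, List.cons_append, splitF_map_inl_append, splitF_cons_dd, ih]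
      simp

lemma splitF_sigmaDelta (s : List (Ev Op Proc)) (L : List (List (Ev Op Proc))) :
    splitF (sigmaDelta (s :: L)) = ([], (s :: L) ++ [[]]) := by
  rw [sigmaDelta_eq]
  simp [splitF_JJ]

lemma splitF_sigmaDelta_nil :
    splitF (sigmaDelta ([] : List (List (Ev Op Proc)))) = ([], [[], []]) := by
  rw [sigmaDelta_eq]; rfl

lemma forall₂_perm_refl (l : List (List (Ev Op Proc))) :
    List.Forall₂ (fun x y => x.Perm y) l l :=
  List.forall₂_same.2 fun x _ => List.Perm.refl x

-- Lemma A: swaps preserve segment permutation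
lemma swapStep_splitF {w w' : List (EvD Op Proc)}
    (h : SwapStep IndepU w w') :
    ((splitF w).1.Perm (splitF w').1) ∧
      List.Forall₂ (fun x y => x.Perm y) (splitF w).2 (splitF w').2 := by
  obtain ⟨u, v, x, y, hI⟩ := h
  obtain ⟨a, b, rfl, rfl⟩ := hI
  induction u with
  | nil =>
      refine ⟨?_, ?_⟩ <;> simp only [List.nil_append, splitF_cons_inl]
      · exact List.Perm.swap b a (splitF v).1
      · exact forall₂_perm_refl _
  | cons z u ih =>
      cases z with
      | inl c =>
          refine ⟨?_, ?_⟩ <;> simp only [List.cons_append, splitF_cons_inl]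
          · exact ih.1.cons c
          · exact ih.2
      | inr q =>
          refine ⟨List.Perm.refl _, ?_⟩
          simp only [List.cons_append, splitF_cons_inr]
          exact List.Forall₂.cons ih.1 ih.2

lemma forall₂_perm_trans {l₁ l₂ l₃ : List (List (Ev Op Proc))}
    (h₁ : List.Forall₂ (fun x y => x.Perm y) l₁ l₂)
    (h₂ : List.Forall₂ (fun x y => x.Perm y) l₂ l₃) :
    List.Forall₂ (fun x y => x.Perm y) l₁ l₃ := by
  induction h₁ generalizing l₃ with
  | nil => cases h₂; exact List.Forall₂.nil
  | cons h hF ih =>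
      cases h₂ with
      | cons h' hF' => exact List.Forall₂.cons (h.trans h') (ih hF')

lemma rtg_splitF {w w' : List (EvD Op Proc)}
    (h : Relation.ReflTransGen (SwapStep (IndepU (Op := Op) (Proc := Proc))) w w') :
    ((splitF w).1.Perm (splitF w').1) ∧
      List.Forall₂ (fun x y => x.Perm y) (splitF w).2 (splitF w').2 := by
  induction h with
  | refl => exact ⟨List.Perm.refl _, forall₂_perm_refl _⟩
  | tail _ hstep ih =>
      have h2 := swapStep_splitF hstep
      exact ⟨ih.1.trans h2.1, forall₂_perm_trans ih.2 h2.2⟩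

-- Lemma B: build swap sequences from permutations
lemma segPerm {s t : List (Ev Op Proc)} (h : s.Perm t) :
    ∀ C₁ C₂ : List (EvD Op Proc),
      Relation.ReflTransGen (SwapStep IndepU)
        (C₁ ++ s.map Sum.inl ++ C₂) (C₁ ++ t.map Sum.inl ++ C₂) := by
  induction h with
  | nil => intro C₁ C₂; exact Relation.ReflTransGen.refl
  | cons x h ih =>
      intro C₁ C₂
      have := ih (C₁ ++ [Sum.inl x]) C₂
      simpa [List.append_assoc] using this
  | swap x y l =>
      intro C₁ C₂
      refine Relation.ReflTransGen.single ?_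
      have := SwapStep.swap (I := IndepU (Op := Op) (Proc := Proc))
        C₁ (l.map Sum.inl ++ C₂) (Sum.inl y) (Sum.inl x) ⟨y, x, rfl, rfl⟩
      simpa [List.append_assoc] using this
  | trans h₁ h₂ ih₁ ih₂ =>
      intro C₁ C₂
      exact (ih₁ C₁ C₂).trans (ih₂ C₁ C₂)

lemma rtg_JJ {T L : List (List (Ev Op Proc))}
    (h : List.Forall₂ (fun t s => t.Perm s) T L) :
    ∀ C₁ : List (EvD Op Proc),
      Relation.ReflTransGen (SwapStep IndepU)
        (C₁ ++ (JJ T ++ [dd])) (C₁ ++ (JJ L ++ [dd])) := by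
  induction h with
  | nil => intro C₁; exact Relation.ReflTransGen.refl
  | @cons t s T' L' h hF ih =>
      intro C₁
      cases T' with
      | nil =>
          cases hF
          have := segPerm h C₁ [dd]
          simpa [JJ_single, List.append_assoc] using this
      | cons t₂ T'' =>
          cases L' with
          | nil => exact absurd hF (by intro hc; cases hc)
          | cons s₂ L'' =>
              have step1 := segPerm h C₁ (dd :: (JJ (t₂ :: T'') ++ [dd]))
              have step2 := ih (C₁ ++ s.map Sum.inl ++ [dd])
              rw [JJ_cons_cons, JJ_cons_cons]
              refine Relation.ReflTransGen.trans
                (b := C₁ ++ (s.map Sum.inl ++ dd :: (JJ (t₂ :: T'') ++ [dd]))) ?_ ?_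
              · simpa [List.append_assoc] using step1
              · simpa [List.append_assoc] using step2

lemma rtg_sigmaDelta {T L : List (List (Ev Op Proc))}
    (h : List.Forall₂ (fun t s => t.Perm s) T L) :
    Relation.ReflTransGen (SwapStep IndepU) (sigmaDelta T) (sigmaDelta L) := by
  have := rtg_JJ h [dd]
  simpa [sigmaDelta, JJ, List.append_assoc] using this

lemma prefix_append_cases {α} {p A B : List α} (h : p <+: A ++ B) :
    p <+: A ∨ ∃ q, p = A ++ q ∧ q <+: B := by
  induction A generalizing p with
  | nil => exact Or.inr ⟨p, by simpa using h⟩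
  | cons a A ih =>
      cases p with
      | nil => exact Or.inl (List.nil_prefix)
      | cons x p =>
          rw [List.cons_append, List.cons_prefix_cons] at h
          obtain ⟨rfl, h⟩ := h
          rcases ih h with h' | ⟨q, rfl, hq⟩
          · exact Or.inl (List.cons_prefix_cons.2 ⟨rfl, h'⟩)
          · exact Or.inr ⟨q, rfl, hq⟩

lemma dd_not_mem_map_inl (s : List (Ev Op Proc)) : dd ∉ s.map Sum.inl := by
  simp [dd]

lemma concat_inj' {α} {u v : List α} {a b : α} (h : u ++ [a] = v ++ [b]) :
    u = v ∧ a = b := by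
  have := List.append_inj h (by
    have := congrArg List.length h
    simpa using this)
  simpa using ⟨this.1, List.head_eq_of_cons_eq this.2⟩

-- Sub-lemma I: prefixes ending in dd of the body give partial flattens
lemma prefix_JJ {L : List (List (Ev Op Proc))} :
    ∀ u : List (EvD Op Proc), u ++ [dd] <+: JJ L ++ [dd] →
      ∃ j, piSigma u = (L.take j).flatten := by
  induction L with
  | nil =>
      intro u h
      simp only [JJ_nil, List.nil_append] at h
      have hl := h.length_le
      simp at hl
      subst hl
      exact ⟨0, rfl⟩
  | cons s L ih =>
      intro u h
      cases L with
      | nil =>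
          rw [JJ_single] at h
          rcases prefix_append_cases h with h' | ⟨q, hq, hqp⟩
          · exact absurd (h'.subset (by simp)) (dd_not_mem_map_inl s)
          · have : q = [dd] := by
              rcases List.prefix_cons_iff.mp hqp with rfl | ⟨q', rfl, hq'⟩
              · exfalso
                rw [List.append_nil] at hq
                exact (dd_not_mem_map_inl s) (hq ▸ (by simp : dd ∈ u ++ [dd]))
              · simpa using List.prefix_nil.mp hq'
            subst this
            obtain ⟨rfl, -⟩ := concat_inj' hq
            exact ⟨1, by simp⟩
      | cons t L' =>
          rw [JJ_cons_cons] at h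
          rw [List.append_assoc] at h
          rcases prefix_append_cases h with h' | ⟨q, hq, hqp⟩
          · exact absurd (h'.subset (by simp)) (dd_not_mem_map_inl s)
          · rcases List.prefix_cons_iff.mp hqp with rfl | ⟨q', rfl, hq'⟩
            · exfalso
              rw [List.append_nil] at hq
              exact (dd_not_mem_map_inl s) (hq ▸ (by simp : dd ∈ u ++ [dd]))
            · rcases List.eq_nil_or_concat q' with rfl | ⟨q'', z, rfl⟩
              · obtain rfl := (by simpa using hq : u = s.map Sum.inl)
                exact ⟨1, by simp⟩
              · have hq2 : u ++ [dd] = (s.map Sum.inl ++ dd :: q'') ++ [z] := by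
                  simpa [List.append_assoc] using hq
                obtain ⟨rfl, rfl⟩ := concat_inj' hq2
                obtain ⟨j, hj⟩ := ih q'' (by simpa using hq')
                refine ⟨j + 1, ?_⟩
                simp [hj]

-- Lemma Q: an even-length prefix of a sequential run is quiescent
lemma quiescent_of_even_prefix {w v : List (Ev Op Proc)}
    (hseq : SequentialRun w) (hpre : v <+: w) (hev : Even v.length) :
    Quiescent v := by
  intro σ₁ e σ₂ hv he
  have hvne : v ≠ [] := by rw [hv]; simp
  have hwne : w ≠ [] := by
    intro h; rw [h, List.prefix_nil] at hpre; exact hvne hpre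
  rcases hseq with h | ⟨-, h2, -⟩
  · exact absurd h hwne
  have hlenv : v.length = σ₁.length + σ₂.length + 1 := by
    rw [hv]; simp only [List.length_append, List.length_cons]; omega
  have hiv : σ₁.length < v.length := by omega
  have hlw : v.length ≤ w.length := hpre.length_le
  have hvi : v[σ₁.length]'hiv = e := by
    have ha : v[σ₁.length]'hiv = (σ₁ ++ e :: σ₂)[σ₁.length]'(hv ▸ hiv) :=
      List.getElem_of_eq hv hiv
    rw [ha, List.getElem_append_right (le_refl _)]
    simp
  rcases Nat.even_or_odd σ₁.length with hpar | hpar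
  · -- even: the matching response is at the next position, inside v
    have hi1 : σ₁.length + 1 < v.length := by
      rcases hev with ⟨m, hm⟩
      rcases hpar with ⟨k, hk⟩
      omega
    have hmatch := h2 σ₁.length (Nat.even_iff.mp hpar) (lt_of_lt_of_le hi1 hlw)
    have hvi1 : v[σ₁.length+1]'hi1 = w[σ₁.length+1]'(lt_of_lt_of_le hi1 hlw) :=
      hpre.getElem hi1
    have hvi' : v[σ₁.length]'hiv = w[σ₁.length]'(lt_of_lt_of_le hiv hlw) :=
      hpre.getElem hiv
    have h0 : 0 < σ₂.length := by omega
    have hveq : v[σ₁.length+1]'hi1 = σ₂[0]'h0 := by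
      have ha : v[σ₁.length+1]'hi1 = (σ₁ ++ e :: σ₂)[σ₁.length+1]'(hv ▸ hi1) :=
        List.getElem_of_eq hv hi1
      rw [ha, List.getElem_append_right (by omega : σ₁.length ≤ σ₁.length + 1)]
      simp
    refine ⟨v[σ₁.length+1]'hi1, ?_, ?_⟩
    · rw [hveq]; exact List.getElem_mem _
    · rw [hvi1, ← hvi, hvi']
      exact hmatch
  · -- odd: impossible, e would be a response
    exfalso
    have hi0 : σ₁.length ≠ 0 := by
      intro h0; rw [h0] at hpar; simp [Nat.odd_iff] at hpar
    have hieq : σ₁.length - 1 + 1 = σ₁.length :=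
      Nat.succ_pred_eq_of_pos (Nat.pos_of_ne_zero hi0)
    have hlt : σ₁.length - 1 + 1 < w.length := by
      rw [hieq]; exact lt_of_lt_of_le hiv hlw
    have hmatch := h2 (σ₁.length - 1) (by
      rcases hpar with ⟨k, hk⟩
      omega) hlt
    have hidx : w[σ₁.length - 1 + 1]'hlt = w[σ₁.length]'(lt_of_lt_of_le hiv hlw) := by
      simp only [hieq]
    have hvi' : v[σ₁.length]'hiv = w[σ₁.length]'(lt_of_lt_of_le hiv hlw) :=
      hpre.getElem hiv
    have hfalse : e.2.2 = false := by
      rw [← hvi, hvi', ← hidx]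
      exact hmatch.2.2.2
    have he' : e.2.2 = true := he
    rw [he'] at hfalse
    exact absurd hfalse (by simp)

lemma filter_last_split {α} (q : α → Bool) (σ : List α) :
    ∀ m (e : α), σ.filter q = m ++ [e] → ∃ σ₁ σ₂, σ = σ₁ ++ e :: σ₂ ∧ σ₂.filter q = [] := by
  induction σ using List.reverseRecOn with
  | nil => intro m e h; simp at h
  | append_singleton σ a ih =>
      intro m e h
      by_cases hqa : q a
      · have h' : List.filter q σ ++ [a] = m ++ [e] := by simpa [hqa] using h
        obtain ⟨-, rfl⟩ := concat_inj' h'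
        exact ⟨σ, [], by simp⟩
      · have h' : List.filter q σ = m ++ [e] := by simpa [hqa] using h
        obtain ⟨σ₁, σ₂, rfl, h2⟩ := ih m e h'
        exact ⟨σ₁, σ₂ ++ [a], by simp [List.filter_append, h2, hqa]⟩

lemma even_length_proj {σ : List (Ev Op Proc)} [DecidableEq Proc]
    (hleg : Legal σ) (hq : Quiescent σ) (p : Proc) :
    Even (proj p σ).length := by
  by_contra hodd
  rw [Nat.not_even_iff_odd] at hodd
  set m := proj p σ with hm
  have hne : m ≠ [] := by
    intro h; rw [h] at hodd; simp [Nat.odd_iff] at hodd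
  rcases hleg p with hnil | ⟨-, -, h3⟩
  · exact hne hnil
  have hpar : (m.length - 1) % 2 = 0 := by
    rcases hodd with ⟨k, hk⟩; omega
  obtain ⟨hlt, hinv⟩ := h3 hpar
  have hlast : m = m.dropLast ++ [m[m.length - 1]'hlt] := by
    conv_lhs => rw [← List.dropLast_append_getLast hne]
    rw [List.getLast_eq_getElem]
  set e := m[m.length - 1]'hlt with he
  have hfil : σ.filter (fun x => x.2.1 = p) = m.dropLast ++ [e] := by
    rw [← hlast]; rfl
  obtain ⟨σ₁, σ₂, hsplit, hfem⟩ := filter_last_split _ σ _ _ hfil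
  obtain ⟨e', he'mem, he'match⟩ := hq σ₁ e σ₂ hsplit hinv
  have hep : e.2.1 = p := by
    have : e ∈ σ.filter (fun x => x.2.1 = p) := by
      rw [hfil]; simp
    simpa using (List.mem_filter.mp this).2
  have he'p : e'.2.1 = p := he'match.2.1 ▸ hep
  have : e' ∈ σ₂.filter (fun x => x.2.1 = p) :=
    List.mem_filter.mpr ⟨he'mem, by simp [he'p]⟩
  rw [hfem] at this
  simp at this

lemma length_eq_sum_countP {α β} [DecidableEq β] (f : α → β) :
    ∀ (l : List α) (B : Finset β), (∀ a ∈ l, f a ∈ B) →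
      l.length = ∑ b ∈ B, l.countP (fun a => f a = b) := by
  intro l
  induction l with
  | nil => intro B _; simp
  | cons a l ih =>
      intro B hB
      have hmem : f a ∈ B := hB a (by simp)
      have := ih B (fun x hx => hB x (by simp [hx]))
      simp only [List.countP_cons, List.length_cons]
      rw [Finset.sum_add_distrib, ← this]
      congr 1
      have heq : ∀ b ∈ B, (if (decide (f a = b)) = true then 1 else 0) = if b = f a then 1 else 0 := by
        intro b _
        by_cases h : f a = b
        · simp [h]
        · simp [h, Ne.symm h]
      rw [Finset.sum_congr rfl heq, Finset.sum_ite_eq' B (f a) (fun _ => 1), if_pos hmem]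

-- Lemma P: a legal quiescent run has even length
lemma even_length_of_legal_quiescent {σ : List (Ev Op Proc)} [DecidableEq Proc]
    (hleg : Legal σ) (hq : Quiescent σ) : Even σ.length := by
  classical
  have hlen := length_eq_sum_countP (fun e : Ev Op Proc => e.2.1) σ
    ((σ.map (fun e => e.2.1)).toFinset) (by intro a ha; exact List.mem_toFinset.mpr (List.mem_map_of_mem (f := fun e : Ev Op Proc => e.2.1) ha))
  rw [hlen]
  apply Finset.even_sum
  intro p _
  have := even_length_proj hleg hq p
  rwa [proj, ← List.countP_eq_length_filter] at this

lemma even_list_sum : ∀ l : List ℕ, (∀ x ∈ l, Even x) → Even l.sum := by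
  intro l
  induction l with
  | nil => intro _; simp
  | cons a l ih =>
      intro h
      rw [List.sum_cons]
      exact (h a (by simp)).add (ih fun x hx => h x (by simp [hx]))

lemma even_flatten {T : List (List (Ev Op Proc))} (h : ∀ t ∈ T, Even t.length) :
    Even T.flatten.length := by
  rw [List.length_flatten]
  exact even_list_sum _ (by
    intro x hx
    obtain ⟨t, ht, rfl⟩ := List.mem_map.mp hx
    exact h t ht)

lemma forall₂_exists_mem {R : List (Ev Op Proc) → List (Ev Op Proc) → Prop}
    {T L : List (List (Ev Op Proc))} (h : List.Forall₂ R T L) :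
    ∀ t ∈ T, ∃ s ∈ L, R t s := by
  induction h with
  | nil => simp
  | cons hr _ ih =>
      intro t ht
      rcases List.mem_cons.mp ht with rfl | ht'
      · exact ⟨_, by simp, hr⟩
      · obtain ⟨s, hs, hrs⟩ := ih t ht'
        exact ⟨s, by simp [hs], hrs⟩

lemma forall₂_append_split {α β} {R : α → β → Prop} :
    ∀ (A : List β) (B : List β) (M : List α), List.Forall₂ R M (A ++ B) →
      ∃ M₁ M₂, M = M₁ ++ M₂ ∧ List.Forall₂ R M₁ A ∧ List.Forall₂ R M₂ B := by
  intro A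
  induction A with
  | nil => intro B M h; exact ⟨[], M, by simp, List.Forall₂.nil, by simpa using h⟩
  | cons a A ih =>
      intro B M h
      cases h with
      | cons hr h' =>
          obtain ⟨M₁, M₂, rfl, h₁, h₂⟩ := ih B _ h'
          exact ⟨_ :: M₁, M₂, by simp, List.Forall₂.cons hr h₁, h₂⟩

lemma even_blocks {T L : List (List (Ev Op Proc))} [DecidableEq Proc]
    (hTL : List.Forall₂ (fun t s => t.Perm s) T L)
    (hblocks : ∀ u ∈ L, u ≠ [] ∧ Legal u ∧ ETEQ u) :
    ∀ t ∈ T, Even t.length := by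
  intro t ht
  obtain ⟨s, hs, hperm⟩ := forall₂_exists_mem hTL t ht
  obtain ⟨-, hleg, heteq⟩ := hblocks s hs
  rw [hperm.length_eq]
  exact even_length_of_legal_quiescent hleg heteq.1

/-- Correctness: every run of L_Q is allowed by L_S under quiescent consistency iff
every σ^δ arising from a run of L_Q belongs to 𝓛_U(S_δ). -/
theorem qc_correctness_iff [DecidableEq Proc]
    (L_S : Set (List (Ev Op Proc)))
    (hLS : ∀ w ∈ L_S, SequentialRun w ∧ Quiescent w)
    (L_Q : Set (List (Ev Op Proc)))
    (hLQ : ∀ σ ∈ L_Q, Legal σ ∧ Quiescent σ) :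
    (∀ σ ∈ L_Q, ∀ L : List (List (Ev Op Proc)), σ = L.flatten →
        (∀ u ∈ L, u ≠ [] ∧ Legal u ∧ ETEQ u) →
        ∃ T : List (List (Ev Op Proc)),
          List.Forall₂ (fun t s => t.Perm s) T L ∧ T.flatten ∈ L_S) ↔
      (∀ σ ∈ L_Q, ∀ L : List (List (Ev Op Proc)), σ = L.flatten →
        (∀ u ∈ L, u ≠ [] ∧ Legal u ∧ ETEQ u) →
        sigmaDelta L ∈ LU (Sdelta L_S)) := by
  constructor
  · -- (a) → (b)
    intro H σ hσ L hflat hblocks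
    obtain ⟨T, hTL, hTS⟩ := H σ hσ L hflat hblocks
    refine ⟨sigmaDelta T, ⟨?_, ?_⟩, rtg_sigmaDelta hTL⟩
    · -- piSigma (sigmaDelta T) ∈ L_S
      cases T with
      | nil => simpa [sigmaDelta_eq] using hTS
      | cons t T' =>
          have : piSigma (sigmaDelta (t :: T')) = (t :: T').flatten := by
            rw [piSigma_eq_splitF, splitF_sigmaDelta]
            simp
          rw [this]
          exact hTS
    · -- prefixes ending in dd are quiescent
      intro u hu
      rw [sigmaDelta_eq] at hu
      cases u with
      | nil => exact quiescent_nil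
      | cons x u' =>
          rw [List.cons_append, List.cons_prefix_cons] at hu
          obtain ⟨rfl, hu'⟩ := hu
          obtain ⟨j, hj⟩ := prefix_JJ u' hu'
          rw [piSigma_cons_dd, hj]
          refine quiescent_of_even_prefix (hLS _ hTS).1
            ⟨(T.drop j).flatten, by rw [← List.flatten_append, List.take_append_drop]⟩ ?_
          exact even_flatten (fun t ht => even_blocks hTL hblocks t (List.mem_of_mem_take ht))
  · -- (b) → (a)
    intro H σ hσ L hflat hblocks
    obtain ⟨w, hwS, hrtg⟩ := H σ hσ L hflat hblocks
    have hsp := rtg_splitF hrtg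
    have hw1 : (splitF w).1 = [] := by
      cases L with
      | nil =>
          rw [splitF_sigmaDelta_nil] at hsp
          exact hsp.1.eq_nil
      | cons s L' =>
          rw [splitF_sigmaDelta] at hsp
          exact hsp.1.eq_nil
    cases L with
    | nil =>
        rw [splitF_sigmaDelta_nil] at hsp
        have h2 := hsp.2
        refine ⟨[], List.Forall₂.nil, ?_⟩
        obtain ⟨x, u', hx, h2', hu⟩ := List.forall₂_cons_right_iff.mp h2
        obtain ⟨y, u'', hy, h2'', hu'⟩ := List.forall₂_cons_right_iff.mp h2'
        have hu'' := List.forall₂_nil_right_iff.mp h2''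
        have hpi : piSigma w = [] := by
          rw [piSigma_eq_splitF, hw1, hu, hu', hu'', hx.eq_nil, hy.eq_nil]
          simp
        have := hwS.1
        rw [hpi] at this
        simpa using this
    | cons s L' =>
        rw [splitF_sigmaDelta] at hsp
        obtain ⟨M₁, M₂, hM, h₁, h₂⟩ := forall₂_append_split (s :: L') [[]] _ hsp.2
        refine ⟨M₁, h₁, ?_⟩
        have hM₂ : M₂ = [[]] := by
          obtain ⟨y, u', hy, h₂', rfl⟩ := List.forall₂_cons_right_iff.mp h₂
          rw [List.forall₂_nil_right_iff.mp h₂', hy.eq_nil]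
        have hpi : piSigma w = M₁.flatten := by
          rw [piSigma_eq_splitF, hw1, hM, hM₂]
          simp
        rw [← hpi]
        exact hwS.1
end

section
/- Fix a type Γ, a natural number n ≥ 1, and functions α, β : Fin n → List Γ (an instance of Post's Correspondence Problem). Let p₁ ≠ p₂ be two distinct processes, for a ∈ Γ and a process p write eᵃᵖ for the invocation event of operation a by process p and ēᵃᵖ for the matching response, and let e, ē be an invocation/response pair by process p₁ for an operation not in Γ. Define toΣ(γ, p) = γ.flatMap (a ↦ [eᵃᵖ, ēᵃᵖ]), w(l) = l.flatMap (i ↦ toΣ(α i, p₁) ++ toΣ(β i, p₂)), and the language L_P = { [e] ++ w(l) ++ [ē] | l : List (Fin n), l ≠ [] }. Then L_P contains a word [e] ++ σ ++ [ē] such that strip(π_{p₁}(σ)) = strip(π_{p₂}(σ)) if and only if there exists a non-empty list l : List (Fin n) with l.flatMap α = l.flatMap β (i.e., the PCP instance (α, β) has a solution). -/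
variable {Op Proc : Type*}

/-- strip: erase the process component of every event. -/
def strip (τ : List (Ev Op Proc)) : List (Op × Bool) :=
  τ.map (fun e => (e.1, e.2.2))

/-- toΣ(γ, p): encode a word γ ∈ Γ* as a run of matching invocation/response pairs
of process p (operations drawn from Γ ⊕ Unit via the left injection). -/
def toSigma {Γ Proc : Type*} (γ : List Γ) (p : Proc) : List (Ev (Γ ⊕ Unit) Proc) :=
  γ.flatMap (fun a => [(Sum.inl a, p, true), (Sum.inl a, p, false)])

/-- w(l): the encoding of a sequence of PCP indices. -/
def pcpWord {Γ Proc : Type*} {n : ℕ} (α β : Fin n → List Γ) (p₁ p₂ : Proc)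
    (l : List (Fin n)) : List (Ev (Γ ⊕ Unit) Proc) :=
  l.flatMap (fun i => toSigma (α i) p₁ ++ toSigma (β i) p₂)

/-- The language L_P = { [e] ++ w(l) ++ [ē] | l ≠ [] }, where e/ē is an
invocation/response pair of process p₁ for the extra operation outside Γ. -/
def pcpLang {Γ Proc : Type*} {n : ℕ} (α β : Fin n → List Γ) (p₁ p₂ : Proc) :
    Set (List (Ev (Γ ⊕ Unit) Proc)) :=
  {x | ∃ l : List (Fin n), l ≠ [] ∧
    x = [((Sum.inr (), p₁, true) : Ev (Γ ⊕ Unit) Proc)] ++ pcpWord α β p₁ p₂ l ++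
        [((Sum.inr (), p₁, false) : Ev (Γ ⊕ Unit) Proc)]}


lemma proj_append {Op Proc : Type*} [DecidableEq Proc] (p : Proc)
    (x y : List (Ev Op Proc)) : proj p (x ++ y) = proj p x ++ proj p y :=
  List.filter_append ..

lemma proj_toSigma_same {Γ Proc : Type*} [DecidableEq Proc] (γ : List Γ) (p : Proc) :
    proj p (toSigma γ p) = toSigma γ p := by
  induction γ with
  | nil => rfl
  | cons a γ ih =>
    show proj p ([(Sum.inl a, p, true), (Sum.inl a, p, false)] ++ toSigma γ p) = _
    rw [proj_append, ih]; simp [proj, toSigma]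

lemma proj_toSigma_ne {Γ Proc : Type*} [DecidableEq Proc] (γ : List Γ) {p q : Proc}
    (h : p ≠ q) : proj q (toSigma γ p) = [] := by
  induction γ with
  | nil => rfl
  | cons a γ ih => simp [toSigma, proj, h] at ih ⊢; simpa [proj] using ih

lemma toSigma_append {Γ Proc : Type*} (γ δ : List Γ) (p : Proc) :
    toSigma (γ ++ δ) p = toSigma γ p ++ toSigma δ p :=
  List.flatMap_append ..

lemma proj_pcpWord₁ {Γ Proc : Type*} [DecidableEq Proc] {n : ℕ} (α β : Fin n → List Γ)
    {p₁ p₂ : Proc} (hp : p₁ ≠ p₂) (l : List (Fin n)) :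
    proj p₁ (pcpWord α β p₁ p₂ l) = toSigma (l.flatMap α) p₁ := by
  induction l with
  | nil => rfl
  | cons i l ih =>
    simp only [pcpWord, List.flatMap_cons] at ih ⊢
    rw [proj_append, proj_append, ih, proj_toSigma_same, proj_toSigma_ne _ hp.symm,
      toSigma_append]
    simp

lemma proj_pcpWord₂ {Γ Proc : Type*} [DecidableEq Proc] {n : ℕ} (α β : Fin n → List Γ)
    {p₁ p₂ : Proc} (hp : p₁ ≠ p₂) (l : List (Fin n)) :
    proj p₂ (pcpWord α β p₁ p₂ l) = toSigma (l.flatMap β) p₂ := by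
  induction l with
  | nil => rfl
  | cons i l ih =>
    simp only [pcpWord, List.flatMap_cons] at ih ⊢
    rw [proj_append, proj_append, ih, proj_toSigma_same, proj_toSigma_ne _ hp,
      toSigma_append]
    simp

lemma strip_toSigma {Γ Proc : Type*} (γ : List Γ) (p : Proc) :
    strip (toSigma γ p) =
      γ.flatMap (fun a => [((Sum.inl a : Γ ⊕ Unit), true), (Sum.inl a, false)]) := by
  induction γ with
  | nil => rfl
  | cons a γ ih => simp [toSigma, strip] at ih ⊢; exact ih

lemma enc_inj {Γ : Type*} : ∀ γ δ : List Γ,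
    γ.flatMap (fun a => [((Sum.inl a : Γ ⊕ Unit), true), (Sum.inl a, false)]) =
      δ.flatMap (fun a => [((Sum.inl a : Γ ⊕ Unit), true), (Sum.inl a, false)]) →
    γ = δ := by
  intro γ
  induction γ with
  | nil => intro δ h; cases δ <;> simp_all
  | cons a γ ih =>
    intro δ h
    cases δ with
    | nil => simp_all
    | cons b δ =>
      simp only [List.flatMap_cons, List.cons_append, List.cons.injEq, Prod.mk.injEq] at h
      obtain ⟨⟨h1, -⟩, -, h2⟩ := h
      obtain rfl : a = b := by injection h1
      exact congrArg _ (ih δ h2)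

/-- L_P contains a word [e] ++ σ ++ [ē] whose projections on p₁ and p₂ agree after
erasing processes iff the PCP instance (α, β) has a solution. -/
theorem pcpLang_iff_pcp_solution {Γ Proc : Type*} [DecidableEq Proc]
    {n : ℕ} (hn : 1 ≤ n) (α β : Fin n → List Γ)
    (p₁ p₂ : Proc) (hp : p₁ ≠ p₂) :
    (∃ σ : List (Ev (Γ ⊕ Unit) Proc),
        ([((Sum.inr (), p₁, true) : Ev (Γ ⊕ Unit) Proc)] ++ σ ++
          [((Sum.inr (), p₁, false) : Ev (Γ ⊕ Unit) Proc)]) ∈ pcpLang α β p₁ p₂ ∧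
        strip (proj p₁ σ) = strip (proj p₂ σ)) ↔
      ∃ l : List (Fin n), l ≠ [] ∧ l.flatMap α = l.flatMap β := by
  constructor
  · rintro ⟨σ, ⟨l, hl, hx⟩, hstrip⟩
    have hσ : σ = pcpWord α β p₁ p₂ l := by simpa using hx
    subst hσ
    refine ⟨l, hl, ?_⟩
    rw [proj_pcpWord₁ α β hp, proj_pcpWord₂ α β hp, strip_toSigma, strip_toSigma] at hstrip
    exact enc_inj _ _ hstrip
  · rintro ⟨l, hl, hsol⟩
    refine ⟨pcpWord α β p₁ p₂ l, ⟨l, hl, rfl⟩, ?_⟩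
    rw [proj_pcpWord₁ α β hp, proj_pcpWord₂ α β hp, strip_toSigma, strip_toSigma, hsol]
end

section
/- Assume the process type Proc is nonempty. For all words w and w' over Σ_δ: w ~_R w' if and only if π_p^δ(w) = π_p^δ(w') for every process p. (Projection characterisation of the trace equivalence over Σ_δ in which δ is dependent on every letter and two events are independent exactly when their processes are distinct.) -/
variable {Op Proc : Type*}

/-- The independence relation R on Σ_δ: two Σ-events commute iff their processes differ
(δ commutes with nothing). -/
def IndepRD (x y : EvD Op Proc) : Prop :=
  ∃ a b : Ev Op Proc, x = Sum.inl a ∧ y = Sum.inl b ∧ a.2.1 ≠ b.2.1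

/-- π_p^δ: keep all δ's and the events of process p. -/
def projD [DecidableEq Proc] (p : Proc) (w : List (EvD Op Proc)) : List (EvD Op Proc) :=
  w.filter (fun x => Sum.elim (fun e : Ev Op Proc => decide (e.2.1 = p)) (fun _ => true) x)


section Aux

open Relation

variable {A : Type*} {I : A → A → Prop}

lemma swapStep_cons (a : A) {l l' : List A} (h : SwapStep I l l') :
    SwapStep I (a :: l) (a :: l') := by
  obtain ⟨u, v, x, y, hxy⟩ := h
  exact SwapStep.swap (a :: u) v x y hxy

lemma rtg_cons (a : A) {l l' : List A}
    (h : ReflTransGen (SwapStep I) l l') :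
    ReflTransGen (SwapStep I) (a :: l) (a :: l') :=
  ReflTransGen.lift (fun x => a :: x) (fun _ _ => swapStep_cons a) _ _ h

lemma swapStep_symm (hI : ∀ x y, I x y → I y x) {l l' : List A}
    (h : SwapStep I l l') : SwapStep I l' l := by
  obtain ⟨u, v, x, y, hxy⟩ := h
  exact SwapStep.swap u v y x (hI _ _ hxy)

lemma rtg_symm (hI : ∀ x y, I x y → I y x) {l l' : List A}
    (h : ReflTransGen (SwapStep I) l l') : ReflTransGen (SwapStep I) l' l := by
  induction h with
  | refl => exact .refl
  | tail _ hstep ih => exact .head (swapStep_symm hI hstep) ih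

lemma rtg_bubble (x : A) :
    ∀ (u v : List A), (∀ c ∈ u, I c x) →
      ReflTransGen (SwapStep I) (u ++ x :: v) (x :: (u ++ v)) := by
  intro u
  induction u with
  | nil => intro v _; exact .refl
  | cons c u' ih =>
    intro v hu
    have h1 : ReflTransGen (SwapStep I) (c :: (u' ++ x :: v)) (c :: (x :: (u' ++ v))) :=
      rtg_cons c (ih v (fun d hd => hu d (List.mem_cons_of_mem _ hd)))
    refine h1.trans (ReflTransGen.single ?_)
    exact SwapStep.swap [] (u' ++ v) c x (hu c (List.mem_cons_self))

end Aux

section Main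

open Relation

variable [DecidableEq Proc]

private def fP (p : Proc) : EvD Op Proc → Bool :=
  fun x => Sum.elim (fun e : Ev Op Proc => decide (e.2.1 = p)) (fun _ => true) x

lemma projD_eq_filter (p : Proc) (w : List (EvD Op Proc)) :
    projD p w = w.filter (fP p) := rfl

omit [DecidableEq Proc] in
lemma indep_symm : ∀ x y : EvD Op Proc, IndepRD x y → IndepRD y x := by
  rintro x y ⟨a, b, rfl, rfl, h⟩
  exact ⟨b, a, rfl, rfl, h.symm⟩

lemma projD_swapStep {w w' : List (EvD Op Proc)}
    (h : SwapStep (IndepRD (Op := Op) (Proc := Proc)) w w') (p : Proc) :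
    projD p w = projD p w' := by
  obtain ⟨u, v, x, y, a, b, rfl, rfl, hab⟩ := h
  simp only [projD_eq_filter, List.filter_append, List.filter_cons]
  have : ¬ (fP p (Sum.inl a) = true ∧ fP p (Sum.inl b) = true) := by
    rintro ⟨ha, hb⟩
    simp only [fP, Sum.elim_inl, decide_eq_true_eq] at ha hb
    exact hab (ha.trans hb.symm)
  rcases Bool.eq_false_or_eq_true (fP p (Sum.inl a)) with ha | ha <;>
    rcases Bool.eq_false_or_eq_true (fP p (Sum.inl b)) with hb | hb <;>
      simp [ha, hb] at this ⊢

lemma backward [Nonempty Proc] :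
    ∀ (w w' : List (EvD Op Proc)), (∀ p : Proc, projD p w = projD p w') →
      ReflTransGen (SwapStep (IndepRD (Op := Op) (Proc := Proc))) w w' := by
  intro w
  induction w with
  | nil =>
    intro w' h
    cases w' with
    | nil => exact .refl
    | cons y v' =>
      exfalso
      cases y with
      | inl e =>
        have := h e.2.1
        simp [projD_eq_filter, fP, List.filter_cons] at this
      | inr u =>
        obtain ⟨p⟩ := ‹Nonempty Proc›
        have := h p
        simp [projD_eq_filter, fP, List.filter_cons] at this
  | cons x t ih =>
    intro w' h
    cases x with
    | inr u =>
      cases w' with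
      | nil =>
        exfalso
        obtain ⟨p⟩ := ‹Nonempty Proc›
        have := h p
        simp [projD_eq_filter, fP, List.filter_cons] at this
      | cons y v' =>
        cases y with
        | inl e =>
          exfalso
          have := h e.2.1
          simp [projD_eq_filter, fP, List.filter_cons] at this
        | inr u' =>
          cases u; cases u'
          have htails : ∀ p : Proc, projD p t = projD p v' := by
            intro p
            have := h p
            simp only [projD_eq_filter, List.filter_cons] at this
            simp only [fP, Sum.elim_inr] at this
            simpa [projD_eq_filter] using this
          exact rtg_cons _ (ih v' htails)
    | inl e =>
      have hq := h e.2.1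
      have hx : fP e.2.1 (Sum.inl e) = true := by simp [fP]
      rw [projD_eq_filter, projD_eq_filter, List.filter_cons, if_pos hx] at hq
      obtain ⟨l₁, l₂, rfl, hl₁, -, hl₂⟩ := List.filter_eq_cons_iff.mp hq.symm
      have hindep : ∀ c ∈ l₁, IndepRD c (Sum.inl e) := by
        intro c hc
        have hcf := hl₁ c hc
        cases c with
        | inr u => simp [fP] at hcf
        | inl b =>
          refine ⟨b, e, rfl, rfl, ?_⟩
          simp only [fP, Sum.elim_inl, decide_eq_true_eq] at hcf
          exact hcf
      have hbubble := rtg_bubble (I := IndepRD (Op := Op) (Proc := Proc))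
        (Sum.inl e) l₁ l₂ hindep
      have htails : ∀ p : Proc, projD p t = projD p (l₁ ++ l₂) := by
        intro p
        by_cases hpq : p = e.2.1
        · have hnil : List.filter (fP p) l₁ = [] := by
            rw [hpq]; exact List.filter_eq_nil_iff.mpr hl₁
          rw [projD_eq_filter, projD_eq_filter, List.filter_append, hnil,
            List.nil_append, hpq, hl₂]
        · have hxp : fP p (Sum.inl e) = false := by
            simp [fP]; exact fun hh => hpq hh.symm
          have := h p
          simp only [projD_eq_filter, List.filter_cons, List.filter_append, hxp] at this ⊢
          simpa using this
      exact (rtg_cons _ (ih (l₁ ++ l₂) htails)).trans (rtg_symm indep_symm hbubble)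

end Main

/-- w ~_R w' iff π_p^δ(w) = π_p^δ(w') for every process p. -/
theorem traceEquivRD_iff_projD_eq [DecidableEq Proc] [Nonempty Proc]
    (w w' : List (EvD Op Proc)) :
    Relation.ReflTransGen (SwapStep (IndepRD (Op := Op) (Proc := Proc))) w w' ↔
      ∀ p : Proc, projD p w = projD p w' := by
  constructor
  · intro h p
    induction h with
    | refl => rfl
    | tail _ hstep ih => exact ih.trans (projD_swapStep hstep p)
  · intro h
    exact backward w w' h
end
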